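/- For any Hausdorff space X and infinite cardinal κ, if L(X) ≤ κ, ψ(X) ≤ κ, and F(X) ≤ κ, then |X| ≤ 2^κ. -/

import Mathlib

open scoped Classical
open Cardinal Set Ordinal

universe u

set_option linter.unusedSectionVars false
set_option maxHeartbeats 1000000

/-- Every open cover (by opens of `X`) of the subset `Y` has a subcover of size `≤ κ`. -/
def LindelofLE {X : Type u} [TopologicalSpace X] (Y : Set X) (κ : Cardinal.{u}) : Prop :=
  ∀ U : Set (Set X), (∀ u ∈ U, IsOpen u) → Y ⊆ ⋃₀ U →
    ∃ V ⊆ U, #V ≤ κ ∧ Y ⊆ ⋃₀ V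

/-- A family indexed by a linear order is a free sequence. -/
def IsFreeSequence {X : Type u} [TopologicalSpace X] {α : Type u} [LinearOrder α]
    (f : α → X) : Prop :=
  ∀ b : α, Disjoint (closure (f '' {a | a < b})) (closure (f '' {a | b ≤ a}))

lemma mk_iUnion_le' {Y ι : Type u} (f : ι → Set Y) {c : Cardinal.{u}} (h : ∀ i, #(f i) ≤ c) :
    #(⋃ i, f i) ≤ #ι * c := by
  refine mk_iUnion_le_sum_mk.trans ?_
  refine (sum_le_sum _ _ h).trans ?_
  simp [sum_const']

lemma mk_biUnion_le' {Y ι : Type u} {s : Set ι} (f : ι → Set Y) {c : Cardinal.{u}}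
    (h : ∀ i ∈ s, #(f i) ≤ c) : #(⋃ i ∈ s, f i) ≤ #s * c := by
  rw [biUnion_eq_iUnion]
  exact mk_iUnion_le' _ fun i => h i i.2

section Aux
variable {X : Type u} [TopologicalSpace X] {κ : Cardinal.{u}}

lemma lindelofLE_closed (hL : LindelofLE (univ : Set X) κ) {C : Set X} (hC : IsClosed C) :
    LindelofLE C κ := by
  intro U hUo hUc
  obtain ⟨V, hVU, hVκ, hVc⟩ := hL (insert Cᶜ U)
    (fun u hu => hu.elim (fun h => h ▸ hC.isOpen_compl) (hUo u)) (by
      intro x _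
      by_cases hx : x ∈ C
      · obtain ⟨u, hu, hxu⟩ := hUc hx
        exact ⟨u, Or.inr hu, hxu⟩
      · exact ⟨Cᶜ, Or.inl rfl, hx⟩)
  refine ⟨V \ {Cᶜ}, ?_, ?_, ?_⟩
  · intro v hv
    rcases hVU hv.1 with h | h
    · exact absurd h hv.2
    · exact h
  · exact (mk_le_mk_of_subset (diff_subset)).trans hVκ
  · intro x hx
    obtain ⟨v, hv, hxv⟩ := hVc (mem_univ x)
    refine ⟨v, ⟨hv, ?_⟩, hxv⟩
    rintro rfl
    exact hxv hx

/-- Closed pseudocharacter: key consequence of ψ ≤ κ, L ≤ κ, T2. -/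
lemma exists_psb [T2Space X] (hκ : ℵ₀ ≤ κ) (hL : LindelofLE (univ : Set X) κ)
    (hψ : ∀ x : X, ∃ U : Set (Set X), (∀ u ∈ U, IsOpen u) ∧ #U ≤ κ ∧ ⋂₀ U = {x}) (x : X) :
    ∃ W : Set (Set X), (∀ w ∈ W, IsOpen w ∧ x ∈ w) ∧ #W ≤ κ ∧ (univ : Set X) ∈ W ∧
      (⋂ w ∈ W, closure w) = {x} := by
  obtain ⟨Uf, hUo, hUκ, hUx⟩ := hψ x
  have hxU : ∀ U ∈ Uf, x ∈ U := fun U hU => by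
    have : x ∈ ⋂₀ Uf := hUx ▸ rfl
    exact this U hU
  -- the family of opens whose closure misses x
  set U₀ : Set (Set X) := {v | IsOpen v ∧ x ∉ closure v} with hU₀
  have hcov : ∀ U : Set X, ∃ V, V ⊆ U₀ ∧ #V ≤ κ ∧ (U ∈ Uf → Uᶜ ⊆ ⋃₀ V) := by
    intro U
    by_cases hU : U ∈ Uf
    · obtain ⟨V, hV1, hV2, hV3⟩ :=
        lindelofLE_closed hL (hUo U hU).isClosed_compl U₀ (fun v hv => hv.1) (by
          intro y hy
          have hyx : y ≠ x := fun h => hy (h ▸ hxU U hU)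
          obtain ⟨oy, ox, hoy, hox, hyo, hxo, hd⟩ := t2_separation hyx
          refine ⟨oy, ⟨hoy, fun hxc => ?_⟩, hyo⟩
          obtain ⟨p, hp1, hp2⟩ := (mem_closure_iff.1 hxc) ox hox hxo
          exact (disjoint_left.1 hd hp2) hp1)
      exact ⟨V, hV1, hV2, fun _ => hV3⟩
    · exact ⟨∅, empty_subset _, by simp, fun h => absurd h hU⟩
  choose Vc hVc1 hVc2 hVc3 using hcov
  set 𝒱 : Set (Set X) := ⋃ U ∈ Uf, Vc U with h𝒱
  have h𝒱U₀ : 𝒱 ⊆ U₀ := by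
    rw [h𝒱]; exact iUnion₂_subset fun U _ => hVc1 U
  have h𝒱κ : #𝒱 ≤ κ := by
    refine (mk_biUnion_le' _ fun U _ => hVc2 U).trans ?_
    refine (mul_le_mul' hUκ le_rfl).trans ?_
    exact (mul_eq_self hκ).le
  refine ⟨insert Set.univ ((fun v => (closure v)ᶜ) '' 𝒱), ?_, ?_, mem_insert _ _, ?_⟩
  · rintro w (rfl | ⟨v, hv, rfl⟩)
    · exact ⟨isOpen_univ, mem_univ x⟩
    · exact ⟨isClosed_closure.isOpen_compl, (h𝒱U₀ hv).2⟩
  · refine (mk_insert_le).trans ?_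
    refine (add_le_add (mk_image_le.trans h𝒱κ) (one_le_aleph0.trans hκ)).trans ?_
    exact (add_eq_self hκ).le
  · apply Subset.antisymm
    · intro p hp
      by_contra hpx
      have hpx' : p ≠ x := fun h => hpx (h ▸ rfl)
      have : ∃ U ∈ Uf, p ∉ U := by
        by_contra h
        push_neg at h
        have : p ∈ ⋂₀ Uf := fun U hU => h U hU
        rw [hUx] at this
        exact hpx' this
      obtain ⟨U, hU, hpU⟩ := this
      obtain ⟨v, hv, hpv⟩ := hVc3 U hU hpU
      have hv𝒱 : v ∈ 𝒱 := mem_biUnion hU hv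
      have hw : p ∈ closure ((closure v)ᶜ) := by
        simp only [mem_iInter] at hp
        exact hp ((closure v)ᶜ) (mem_insert_of_mem _ ⟨v, hv𝒱, rfl⟩)
      rw [closure_compl] at hw
      exact hw (interior_maximal subset_closure (h𝒱U₀ hv𝒱).1 hpv)
    · intro p hp
      rw [mem_singleton_iff] at hp
      subst hp
      refine mem_iInter₂.2 fun w hw => ?_
      rcases hw with rfl | ⟨v, hv, rfl⟩
      · exact subset_closure (mem_univ _)
      · exact subset_closure fun h => (h𝒱U₀ hv).2 h


lemma clcard (hκ : ℵ₀ ≤ κ) (Vf : X → Set (Set X))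
    (hVo : ∀ x, ∀ w ∈ Vf x, IsOpen w ∧ x ∈ w) (hVκ : ∀ x, #(Vf x) ≤ κ)
    (hVu : ∀ x, (Set.univ : Set X) ∈ Vf x) (hVi : ∀ x, (⋂ w ∈ Vf x, closure w) = {x})
    {B : Set X} (hB : #B ≤ κ) : #(closure B) ≤ 2 ^ κ := by
  have henum : ∀ x : X, ∃ g : κ.out → Set X, range g = Vf x := by
    intro x
    have h1 : #(Vf x) ≤ #(κ.out) := by rw [mk_out]; exact hVκ x
    obtain ⟨e⟩ := (le_def _ _).1 h1
    have hne : Nonempty (Vf x) := ⟨⟨Set.univ, hVu x⟩⟩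
    refine ⟨fun i => ((Function.invFun e i : Vf x) : Set X), ?_⟩
    have : (fun i => ((Function.invFun e i : Vf x) : Set X)) =
        (Subtype.val ∘ Function.invFun (⇑e)) := rfl
    rw [this, range_comp, (Function.invFun_surjective e.injective).range_eq,
      image_univ, Subtype.range_coe]
  choose gE hgE using henum
  have key : ∀ x ∈ closure B, (⋂ i, closure (gE x i ∩ B)) = {x} := by
    intro x hx
    apply Subset.antisymm
    · intro p hp
      rw [← hVi x, ← hgE x, biInter_range]
      exact iInter_mono (fun i => closure_mono inter_subset_left) hp
    · intro p hp
      rw [mem_singleton_iff] at hp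
      rw [hp]
      refine mem_iInter.2 fun i => ?_
      have hgi : gE x i ∈ Vf x := by rw [← hgE x]; exact mem_range_self i
      obtain ⟨hgo, hgx⟩ := hVo x _ hgi
      rw [mem_closure_iff]
      intro o ho hpo
      obtain ⟨q, hq1, hq2⟩ := (mem_closure_iff.1 hx) (o ∩ gE x i) (ho.inter hgo) ⟨hpo, hgx⟩
      exact ⟨q, hq1.1, hq1.2, hq2⟩
  have hinj : Function.Injective
      (fun p : closure B => fun i : κ.out => (Subtype.val ⁻¹' (gE p.1 i) : Set B)) := by
    intro p q hpq
    have h1 : ∀ i, gE p.1 i ∩ B = gE q.1 i ∩ B := by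
      intro i
      have h := congrFun hpq i
      dsimp only at h
      rw [inter_comm (gE p.1 i) B, inter_comm (gE q.1 i) B,
        ← Subtype.image_preimage_coe, ← Subtype.image_preimage_coe, h]
    have h2 : ({p.1} : Set X) = {q.1} := by
      rw [← key p.1 p.2, ← key q.1 q.2]
      exact iInter_congr fun i => by rw [h1 i]
    exact Subtype.ext (singleton_eq_singleton_iff.1 h2)
  calc #(closure B) ≤ #(κ.out → Set B) := mk_le_of_injective hinj
    _ = #(Set B) ^ κ := by rw [← power_def, mk_out]
    _ = (2 ^ #B) ^ κ := by rw [mk_set]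
    _ ≤ (2 ^ κ) ^ κ := power_le_power_right (power_le_power_left two_ne_zero hB)
    _ = 2 ^ (κ * κ) := by rw [← power_mul]
    _ = 2 ^ κ := by rw [mul_eq_self hκ]

end Aux


section Defs
variable {X : Type u} [TopologicalSpace X] (κ : Cardinal.{u}) (Vf : X → Set (Set X))

/-- union of the fixed pseudobases over a set -/
def famU (S : Set X) : Set (Set X) := ⋃ x ∈ S, Vf x

def smallCl (S : Set X) : Set X := ⋃ B ∈ {B : Set X | B ⊆ S ∧ #B ≤ κ}, closure B

noncomputable def pickC [Nonempty X] (𝒱 : Set (Set X)) : X :=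
  if h : ((⋃₀ 𝒱)ᶜ : Set X).Nonempty then h.some else Classical.arbitrary X

lemma pickC_spec [Nonempty X] {𝒱 : Set (Set X)} (h : ((⋃₀ 𝒱)ᶜ : Set X).Nonempty) :
    pickC 𝒱 ∈ (⋃₀ 𝒱)ᶜ := by
  rw [pickC, dif_pos h]; exact h.some_mem

def goodFams (S : Set X) : Set (Set (Set X)) :=
  {𝒱 | 𝒱 ⊆ famU Vf S ∧ #𝒱 ≤ κ ∧ ((⋃₀ 𝒱)ᶜ : Set X).Nonempty}

def bigF [Nonempty X] (S : Set X) : Set X :=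
  S ∪ smallCl κ S ∪ pickC '' goodFams κ Vf S

lemma subset_bigF [Nonempty X] (S : Set X) : S ⊆ bigF κ Vf S :=
  fun _ h => Or.inl (Or.inl h)

noncomputable def stageF [Nonempty X] : (Order.succ κ).ord.ToType → Set X :=
  (wellFounded_lt).fix fun ξ ih => bigF κ Vf (⋃ η : Set.Iio ξ, ih η.1 η.2)

lemma stageF_eq [Nonempty X] (ξ : (Order.succ κ).ord.ToType) :
    stageF κ Vf ξ = bigF κ Vf (⋃ η : Set.Iio ξ, stageF κ Vf η.1) :=
  WellFounded.fix_eq _ _ _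

end Defs


set_option linter.unusedSectionVars false

section Defs
variable {X : Type u} [TopologicalSpace X] (κ : Cardinal.{u}) (Vf : X → Set (Set X))
  (A : Set X) (z : X)

noncomputable def pick2 [Nonempty X] (𝒱 : Set (Set X)) : X :=
  if h : (A ∩ (⋃₀ 𝒱)ᶜ).Nonempty then h.some else Classical.arbitrary X

lemma pick2_spec [Nonempty X] {𝒱 : Set (Set X)} (h : (A ∩ (⋃₀ 𝒱)ᶜ).Nonempty) :
    pick2 A 𝒱 ∈ A ∩ (⋃₀ 𝒱)ᶜ := by
  rw [pick2, dif_pos h]; exact h.some_mem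

def covProp (P : Set X) (V : Set (Set X)) : Prop :=
  (∀ v ∈ V, (∃ y ∈ closure P, v ∈ Vf y) ∧ z ∉ closure v) ∧ #V ≤ κ ∧ closure P ⊆ ⋃₀ V

noncomputable def covFam (P : Set X) : Set (Set X) :=
  if h : ∃ V, covProp κ Vf z P V then h.choose else ∅

lemma covFam_spec {P : Set X} (h : ∃ V, covProp κ Vf z P V) :
    covProp κ Vf z P (covFam κ Vf z P) := by
  rw [covFam, dif_pos h]; exact h.choose_spec

noncomputable def seqF [Nonempty X] : (Order.succ κ).ord.ToType → X :=
  (wellFounded_lt).fix fun ξ ih =>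
    pick2 A (⋃ η : Set.Iic ξ, covFam κ Vf z {x | ∃ ρ, ∃ hρ : ρ < ξ, ρ < η.1 ∧ ih ρ hρ = x})

noncomputable def bigV [Nonempty X] (ξ : (Order.succ κ).ord.ToType) : Set (Set X) :=
  ⋃ η : Set.Iic ξ, covFam κ Vf z (seqF κ Vf A z '' {ρ | ρ < η.1})

lemma seqF_eq [Nonempty X] (ξ : (Order.succ κ).ord.ToType) :
    seqF κ Vf A z ξ = pick2 A (bigV κ Vf A z ξ) := by
  rw [seqF, WellFounded.fix_eq]
  congr 1
  rw [bigV]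
  apply iUnion_congr
  rintro ⟨η, hη⟩
  refine congrArg _ ?_
  ext x
  simp only [mem_image, mem_setOf_eq]
  constructor
  · rintro ⟨ρ, hρξ, hρη, rfl⟩; exact ⟨ρ, hρη, rfl⟩
  · rintro ⟨ρ, hρη, rfl⟩; exact ⟨ρ, lt_of_lt_of_le hρη hη, hρη, rfl⟩

end Defs

/-- For any Hausdorff `X` and infinite `κ`: if `L(X) ≤ κ`, `ψ(X) ≤ κ` and `F(X) ≤ κ`,
then `|X| ≤ 2^κ`. -/
theorem statement5 {X : Type u} [TopologicalSpace X] [T2Space X] {κ : Cardinal.{u}}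
    (hκ : ℵ₀ ≤ κ)
    (hL : LindelofLE (Set.univ : Set X) κ)
    (hψ : ∀ x : X, ∃ U : Set (Set X), (∀ u ∈ U, IsOpen u) ∧ #U ≤ κ ∧ ⋂₀ U = {x})
    (hF : ∀ (α : Type u) [LinearOrder α] [WellFoundedLT α] (f : α → X),
      IsFreeSequence f → #α ≤ κ) :
    #X ≤ 2 ^ κ := by
  rcases isEmpty_or_nonempty X with hE | hNE
  · exact le_trans (le_of_eq (mk_eq_zero X)) zero_le
  choose Vf hVo hVκ hVu hVi using exists_psb hκ hL hψ
  -- basic cardinal facts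
  have hk2 : κ ≤ 2 ^ κ := (cantor κ).le
  have h2inf : ℵ₀ ≤ 2 ^ κ := hκ.trans hk2
  have hmul : ∀ {a b : Cardinal.{u}}, a ≤ 2 ^ κ → b ≤ 2 ^ κ → a * b ≤ 2 ^ κ := by
    intro a b ha hb
    exact (mul_le_max a b).trans (max_le (max_le ha hb) h2inf)
  have hpow : ((2 : Cardinal.{u}) ^ κ) ^ κ = 2 ^ κ := by rw [← power_mul, mul_eq_self hκ]
  have hαcard : #((Order.succ κ).ord.ToType) = Order.succ κ := by
    rw [mk_toType, card_ord]
  have hIio : ∀ ξ : (Order.succ κ).ord.ToType, #(Set.Iio ξ) ≤ κ :=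
    fun ξ => Order.lt_succ_iff.1 (mk_Iio_ord_toType ξ)
  have hIic : ∀ ξ : (Order.succ κ).ord.ToType, #(Set.Iic ξ) ≤ κ := by
    intro ξ
    rw [← Set.Iio_insert]
    refine (mk_insert_le).trans ?_
    refine (add_le_add (hIio ξ) (one_le_aleph0.trans hκ)).trans (add_eq_self hκ).le
  -- bounding small families of indices
  have hbound : ∀ {ι : Type u} (g : ι → (Order.succ κ).ord.ToType), #ι ≤ κ →
      ∃ ξ, ∀ i, g i < ξ := by
    intro ι g hι
    by_contra h
    push_neg at h
    have hcover : (Set.univ : Set ((Order.succ κ).ord.ToType)) = ⋃ i, Set.Iic (g i) := by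
      apply Subset.antisymm
      · intro ξ _
        obtain ⟨i, hi⟩ := h ξ
        exact mem_iUnion.2 ⟨i, hi⟩
      · exact subset_univ _
    have hcard : #((Order.succ κ).ord.ToType) ≤ κ := by
      calc #((Order.succ κ).ord.ToType)
          = #(Set.univ : Set ((Order.succ κ).ord.ToType)) := mk_univ.symm
        _ = #(⋃ i, Set.Iic (g i)) := by rw [hcover]
        _ ≤ #ι * κ := mk_iUnion_le' _ (fun i => hIic (g i))
        _ ≤ κ * κ := mul_le_mul' hι le_rfl
        _ = κ := mul_eq_self hκ
    rw [hαcard] at hcard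
    exact absurd hcard (not_le.2 (Order.lt_succ κ))
  -- cardinality of stages
  have bigF_card : ∀ S : Set X, #S ≤ 2 ^ κ → #(bigF κ Vf S) ≤ 2 ^ κ := by
    intro S hS
    have hsmall : #(smallCl κ S) ≤ 2 ^ κ := by
      refine (mk_biUnion_le' _ (fun B hB => clcard hκ Vf hVo hVκ hVu hVi hB.2)).trans ?_
      refine hmul ?_ le_rfl
      refine (mk_bounded_subset_le S κ).trans ?_
      calc max #S ℵ₀ ^ κ ≤ (2 ^ κ) ^ κ :=
            power_le_power_right (max_le hS h2inf)
        _ = 2 ^ κ := hpow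
    have hfam : #(famU Vf S) ≤ 2 ^ κ := by
      refine (mk_biUnion_le' _ (fun x _ => hVκ x)).trans (hmul hS hk2)
    have hgood : #(goodFams κ Vf S) ≤ 2 ^ κ := by
      have hsub : goodFams κ Vf S ⊆ {V : Set (Set X) | V ⊆ famU Vf S ∧ #V ≤ κ} :=
        fun V hV => ⟨hV.1, hV.2.1⟩
      refine (mk_le_mk_of_subset hsub).trans ?_
      refine (mk_bounded_subset_le (famU Vf S) κ).trans ?_
      calc max #(famU Vf S) ℵ₀ ^ κ ≤ (2 ^ κ) ^ κ :=
            power_le_power_right (max_le hfam h2inf)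
        _ = 2 ^ κ := hpow
    have hpick : #(pickC '' goodFams κ Vf S : Set X) ≤ 2 ^ κ := mk_image_le.trans hgood
    refine (mk_union_le _ _).trans ?_
    refine (add_le_add ((mk_union_le _ _).trans ?_) hpick).trans (add_eq_self h2inf).le
    exact (add_le_add hS hsmall).trans (add_eq_self h2inf).le
  have stage_card : ∀ ξ : (Order.succ κ).ord.ToType, #(stageF κ Vf ξ) ≤ 2 ^ κ := by
    intro ξ
    refine wellFounded_lt.induction (C := fun ξ => #(stageF κ Vf ξ) ≤ 2 ^ κ) ξ ?_
    intro ξ ih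
    rw [stageF_eq]
    refine bigF_card _ ?_
    have : ∀ η : Set.Iio ξ, #(stageF κ Vf η.1) ≤ 2 ^ κ := fun η => ih η.1 η.2
    refine (mk_iUnion_le' _ this).trans (hmul ((hIio ξ).trans hk2) le_rfl)
  have stage_mono : ∀ {ξ ζ : (Order.succ κ).ord.ToType}, ξ < ζ →
      stageF κ Vf ξ ⊆ stageF κ Vf ζ := by
    intro ξ ζ hξζ
    rw [stageF_eq κ Vf ζ]
    refine subset_trans ?_ (subset_bigF κ Vf _)
    exact subset_iUnion_of_subset ⟨ξ, hξζ⟩ subset_rfl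
  set A : Set X := ⋃ ξ : (Order.succ κ).ord.ToType, stageF κ Vf ξ with hA
  have hAcard : #A ≤ 2 ^ κ := by
    rw [hA]
    refine (mk_iUnion_le' _ stage_card).trans ?_
    rw [hαcard]
    exact hmul (Order.succ_le_of_lt (cantor κ)) le_rfl
  -- κ-closedness of A
  have kcl : ∀ B : Set X, B ⊆ A → #B ≤ κ → closure B ⊆ A := by
    intro B hBA hBκ
    have hst : ∀ b : B, ∃ ξ, b.1 ∈ stageF κ Vf ξ := fun b => mem_iUnion.1 (hBA b.2)
    choose s hs using hst
    obtain ⟨ξ', hξ'⟩ := hbound s hBκ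
    have hBS : B ⊆ ⋃ η : Set.Iio ξ', stageF κ Vf η.1 := by
      intro b hb
      exact mem_iUnion.2 ⟨⟨s ⟨b, hb⟩, hξ' ⟨b, hb⟩⟩, hs ⟨b, hb⟩⟩
    have h1 : closure B ⊆ bigF κ Vf (⋃ η : Set.Iio ξ', stageF κ Vf η.1) := by
      intro p hp
      exact Or.inl (Or.inr (mem_biUnion ⟨hBS, hBκ⟩ hp))
    rw [← stageF_eq] at h1
    exact h1.trans (subset_iUnion_of_subset ξ' subset_rfl)
  -- saturation of A
  have sat : ∀ 𝒱 : Set (Set X), (∀ v ∈ 𝒱, ∃ x ∈ A, v ∈ Vf x) → #𝒱 ≤ κ →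
      ((⋃₀ 𝒱)ᶜ : Set X).Nonempty → (A ∩ (⋃₀ 𝒱)ᶜ).Nonempty := by
    intro 𝒱 hw h𝒱 hne
    have hw' : ∀ v : 𝒱, ∃ x, x ∈ A ∧ v.1 ∈ Vf x := by
      intro v; obtain ⟨x, hx1, hx2⟩ := hw v v.2; exact ⟨x, hx1, hx2⟩
    choose w hwA hwV using hw'
    have hst : ∀ v : 𝒱, ∃ ξ, w v ∈ stageF κ Vf ξ := fun v => mem_iUnion.1 (hwA v)
    choose s hs using hst
    obtain ⟨ξ', hξ'⟩ := hbound s h𝒱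
    have h𝒱S : 𝒱 ∈ goodFams κ Vf (⋃ η : Set.Iio ξ', stageF κ Vf η.1) := by
      refine ⟨?_, h𝒱, hne⟩
      intro v hv
      have hwS : w ⟨v, hv⟩ ∈ ⋃ η : Set.Iio ξ', stageF κ Vf η.1 :=
        mem_iUnion.2 ⟨⟨s ⟨v, hv⟩, hξ' ⟨v, hv⟩⟩, hs ⟨v, hv⟩⟩
      exact mem_biUnion hwS (hwV ⟨v, hv⟩)
    have hp := pickC_spec hne
    refine ⟨pickC 𝒱, ?_, hp⟩
    have hmem : pickC 𝒱 ∈ bigF κ Vf (⋃ η : Set.Iio ξ', stageF κ Vf η.1) :=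
      Or.inr (mem_image_of_mem _ h𝒱S)
    rw [← stageF_eq] at hmem
    exact mem_iUnion.2 ⟨ξ', hmem⟩
  -- every point is in A
  have hXA : ∀ z : X, z ∈ A := by
    intro z
    by_contra hz
    have covEx : ∀ P : Set X, P ⊆ A → #P ≤ κ → ∃ V, covProp κ Vf z P V := by
      intro P hPA hPκ
      have hclA : closure P ⊆ A := kcl P hPA hPκ
      have hcov : closure P ⊆
          ⋃₀ {v : Set X | (∃ y ∈ closure P, v ∈ Vf y) ∧ z ∉ closure v} := by
        intro y hy
        have hzy : z ≠ y := fun h => hz (h ▸ hclA hy)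
        have hex : ∃ v ∈ Vf y, z ∉ closure v := by
          by_contra h; push_neg at h
          have : z ∈ ⋂ w ∈ Vf y, closure w := mem_iInter₂.2 h
          rw [hVi y] at this
          exact hzy this
        obtain ⟨v, hv1, hv2⟩ := hex
        exact ⟨v, ⟨⟨y, hy, hv1⟩, hv2⟩, (hVo y v hv1).2⟩
      obtain ⟨V, hV1, hV2, hV3⟩ := lindelofLE_closed hL isClosed_closure _
        (fun v hv => by obtain ⟨y, _, hvy⟩ := hv.1; exact (hVo y v hvy).1) hcov
      exact ⟨V, fun v hv => hV1 hv, hV2, hV3⟩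
    have seq_props : ∀ ξ : (Order.succ κ).ord.ToType,
        seqF κ Vf A z ξ ∈ A ∧ ∀ η, η ≤ ξ →
          seqF κ Vf A z ξ ∉ ⋃₀ covFam κ Vf z (seqF κ Vf A z '' {ρ | ρ < η}) := by
      intro ξ
      refine wellFounded_lt.induction
        (C := fun ξ => seqF κ Vf A z ξ ∈ A ∧ ∀ η, η ≤ ξ →
          seqF κ Vf A z ξ ∉ ⋃₀ covFam κ Vf z (seqF κ Vf A z '' {ρ | ρ < η})) ξ ?_
      intro ξ ih
      have hseg : ∀ η, η ≤ ξ → (seqF κ Vf A z '' {ρ | ρ < η}) ⊆ A ∧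
          #(seqF κ Vf A z '' {ρ | ρ < η}) ≤ κ := by
        intro η hη
        constructor
        · rintro _ ⟨ρ, hρ, rfl⟩
          exact (ih ρ (lt_of_lt_of_le hρ hη)).1
        · exact mk_image_le.trans (hIio η)
      have hcf : ∀ η, η ≤ ξ → covProp κ Vf z (seqF κ Vf A z '' {ρ | ρ < η})
          (covFam κ Vf z (seqF κ Vf A z '' {ρ | ρ < η})) :=
        fun η hη => covFam_spec _ _ _ (covEx _ (hseg η hη).1 (hseg η hη).2)
      have hb1 : ∀ v ∈ bigV κ Vf A z ξ, (∃ x ∈ A, v ∈ Vf x) ∧ z ∉ closure v := by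
        intro v hv
        obtain ⟨η, hvη⟩ := mem_iUnion.1 hv
        obtain ⟨⟨y, hy, hvy⟩, hz'⟩ := (hcf η.1 η.2).1 v hvη
        exact ⟨⟨y, kcl _ (hseg η.1 η.2).1 (hseg η.1 η.2).2 hy, hvy⟩, hz'⟩
      have hb2a : ∀ η : Set.Iic ξ, #(covFam κ Vf z (seqF κ Vf A z '' {ρ | ρ < η.1})) ≤ κ :=
        fun η => (hcf η.1 η.2).2.1
      have hb2 : #(bigV κ Vf A z ξ) ≤ κ := by
        rw [bigV]
        refine (mk_iUnion_le' _ hb2a).trans ?_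
        exact (mul_le_mul' (hIic ξ) le_rfl).trans (mul_eq_self hκ).le
      have hb3 : z ∉ ⋃₀ bigV κ Vf A z ξ := by
        rintro ⟨v, hv, hzv⟩
        exact (hb1 v hv).2 (subset_closure hzv)
      have hne : (A ∩ (⋃₀ bigV κ Vf A z ξ)ᶜ).Nonempty :=
        sat _ (fun v hv => (hb1 v hv).1) hb2 ⟨z, hb3⟩
      have hmem := pick2_spec A hne
      rw [← seqF_eq] at hmem
      refine ⟨hmem.1, ?_⟩
      intro η hη hcontra
      apply hmem.2
      obtain ⟨v, hv, hfv⟩ := hcontra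
      exact ⟨v, mem_iUnion.2 ⟨⟨η, hη⟩, hv⟩, hfv⟩
    have hfree : IsFreeSequence (seqF κ Vf A z) := by
      intro b
      have hsegb : (seqF κ Vf A z '' {a | a < b}) ⊆ A ∧
          #(seqF κ Vf A z '' {a | a < b}) ≤ κ := by
        constructor
        · rintro _ ⟨ρ, _, rfl⟩
          exact (seq_props ρ).1
        · exact mk_image_le.trans (hIio b)
      have hcf := covFam_spec κ Vf z (covEx _ hsegb.1 hsegb.2)
      have hGopen : IsOpen (⋃₀ covFam κ Vf z (seqF κ Vf A z '' {a | a < b})) := by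
        refine isOpen_sUnion fun v hv => ?_
        obtain ⟨y, _, hvy⟩ := (hcf.1 v hv).1
        exact (hVo y v hvy).1
      rw [disjoint_left]
      intro p hpI hpT
      have hTG : seqF κ Vf A z '' {a | b ≤ a} ⊆
          (⋃₀ covFam κ Vf z (seqF κ Vf A z '' {a | a < b}))ᶜ := by
        rintro _ ⟨a, ha, rfl⟩
        exact fun hmem => (seq_props a).2 b ha hmem
      have : p ∈ (⋃₀ covFam κ Vf z (seqF κ Vf A z '' {a | a < b}))ᶜ :=
        closure_minimal hTG hGopen.isClosed_compl hpT
      exact this (hcf.2.2 hpI)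
    have hcon := hF ((Order.succ κ).ord.ToType) (seqF κ Vf A z) hfree
    rw [hαcard] at hcon
    exact absurd hcon (not_le.2 (Order.lt_succ κ))
  have hAu : A = Set.univ := eq_univ_of_forall hXA
  calc #X = #(Set.univ : Set X) := mk_univ.symm
    _ = #A := by rw [hAu]
    _ ≤ 2 ^ κ := hAcard
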